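/- For every n ≥ 1, every ε > 0 and every K ≥ 0, there exists a diagonal matrix Q with strictly positive diagonal entries such that εQ − K·LᵀQL is positive definite, where L is the n×n strictly lower triangular matrix of all ones. -/

import Mathlib

open Matrix Finset

theorem exists_diagonal_weight_posdef (n : ℕ) (hn : 1 ≤ n) (ε : ℝ) (hε : 0 < ε)
    (K : ℝ) (hK : 0 ≤ K)
    (L : Matrix (Fin n) (Fin n) ℝ) (hL : ∀ i j, L i j = if j < i then 1 else 0) :
    ∃ q : Fin n → ℝ, (∀ i, 0 < q i) ∧
      (ε • Matrix.diagonal q - K • (Lᵀ * Matrix.diagonal q * L)).PosDef := by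
  set t : ℝ := ε / (ε + K * n ^ 2) with ht_def
  have hden : 0 < ε + K * n ^ 2 := by positivity
  have ht0 : 0 < t := by positivity
  have ht1 : t ≤ 1 := by rw [ht_def, div_le_one hden]; nlinarith
  have ht_eq : t * (ε + K * n ^ 2) = ε := div_mul_cancel₀ _ hden.ne'
  have hKt : K * n ^ 2 * t < ε := by nlinarith
  set q : Fin n → ℝ := fun i => t ^ (i : ℕ) with hq
  have hQH : (Matrix.diagonal q).IsHermitian := isHermitian_diagonal q
  refine ⟨q, fun i => pow_pos ht0 _, posDef_iff_dotProduct_mulVec.mpr ⟨?_, ?_⟩⟩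
  · -- Hermitian
    show Matrix.IsHermitian _
    unfold Matrix.IsHermitian
    have hct : ∀ A : Matrix (Fin n) (Fin n) ℝ, Aᴴ = Aᵀ := fun A => by
      ext i j; simp [conjTranspose_apply]
    rw [hct]
    simp [transpose_sub, transpose_smul, transpose_mul, transpose_transpose,
      diagonal_transpose, mul_assoc]
  · -- positivity of the quadratic form
    intro x hx
    set y : Fin n → ℝ := L *ᵥ x with hy
    have hyi : ∀ i, y i = ∑ j, if j < i then x j else 0 := by
      intro i
      simp only [hy, mulVec, dotProduct]
      exact Finset.sum_congr rfl fun j _ => by rw [hL]; split <;> simp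
    have hform : star x ⬝ᵥ ((ε • Matrix.diagonal q - K • (Lᵀ * Matrix.diagonal q * L)) *ᵥ x)
        = ε * ∑ i, q i * x i ^ 2 - K * ∑ i, q i * y i ^ 2 := by
      rw [star_trivial, sub_mulVec, dotProduct_sub, smul_mulVec, smul_mulVec,
        dotProduct_smul, dotProduct_smul]
      congr 1
      · rw [smul_eq_mul]
        congr 1
        simp only [dotProduct, mulVec_diagonal]
        exact Finset.sum_congr rfl fun i _ => by ring
      · rw [smul_eq_mul]
        congr 1
        rw [mul_assoc, ← mulVec_mulVec, ← mulVec_mulVec, dotProduct_mulVec, vecMul_transpose, ← hy]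
        simp only [dotProduct, mulVec_diagonal]
        exact Finset.sum_congr rfl fun i _ => by ring
    rw [hform]
    -- bound the second sum
    have hstep1 : ∀ i : Fin n, y i ^ 2 ≤ n * ∑ j, if j < i then x j ^ 2 else 0 := by
      intro i
      rw [hyi]
      calc (∑ j, if j < i then x j else 0) ^ 2
          ≤ (Finset.univ.card : ℝ) * ∑ j, (if j < i then x j else 0) ^ 2 :=
            sq_sum_le_card_mul_sum_sq
        _ = n * ∑ j, if j < i then x j ^ 2 else 0 := by
            rw [Finset.card_univ, Fintype.card_fin]
            congr 1
            exact Finset.sum_congr rfl fun j _ => by split <;> simp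
    have hbound : ∑ i, q i * y i ^ 2 ≤ n ^ 2 * t * ∑ j, q j * x j ^ 2 := by
      calc ∑ i, q i * y i ^ 2
          ≤ ∑ i, q i * (n * ∑ j, if j < i then x j ^ 2 else 0) := by
            refine Finset.sum_le_sum fun i _ => ?_
            exact mul_le_mul_of_nonneg_left (hstep1 i) (pow_pos ht0 _).le
        _ = n * ∑ i, ∑ j, (if j < i then q i * x j ^ 2 else 0) := by
            rw [Finset.mul_sum]
            refine Finset.sum_congr rfl fun i _ => ?_
            have h1 : ∑ j, (if j < i then q i * x j ^ 2 else 0)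
                = q i * ∑ j, (if j < i then x j ^ 2 else 0) := by
              rw [Finset.mul_sum]
              exact Finset.sum_congr rfl fun j _ => by split <;> ring
            rw [h1]; ring
        _ = n * ∑ j, ∑ i, (if j < i then q i * x j ^ 2 else 0) := by
            rw [Finset.sum_comm]
        _ ≤ n * ∑ j : Fin n, ∑ _i : Fin n, t ^ ((j : ℕ) + 1) * x j ^ 2 := by
            refine mul_le_mul_of_nonneg_left (Finset.sum_le_sum fun j _ =>
              Finset.sum_le_sum fun i _ => ?_) (Nat.cast_nonneg n)
            split
            · rename_i h
              refine mul_le_mul_of_nonneg_right ?_ (sq_nonneg _)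
              exact pow_le_pow_of_le_one ht0.le ht1 (Fin.lt_iff_val_lt_val.mp h)
            · positivity
        _ = n ^ 2 * t * ∑ j : Fin n, q j * x j ^ 2 := by
            simp only [Finset.sum_const, Finset.card_univ, Fintype.card_fin, nsmul_eq_mul,
              Finset.mul_sum]
            refine Finset.sum_congr rfl fun j _ => ?_
            rw [hq]
            ring
    have hpos : 0 < ∑ j, q j * x j ^ 2 := by
      obtain ⟨i, hi⟩ := Function.ne_iff.mp hx
      refine Finset.sum_pos' (fun j _ => by positivity) ⟨i, Finset.mem_univ i, ?_⟩
      have hxi : 0 < x i ^ 2 := (sq_nonneg _).lt_of_ne' (pow_ne_zero 2 hi)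
      exact mul_pos (pow_pos ht0 _) hxi
    nlinarith [mul_le_mul_of_nonneg_left hbound hK]
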